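/- If G has broadcast dimension k, then any clique in G has at most 2^k vertices, and this bound is attained for every k. -/

import Mathlib

open SimpleGraph Finset

variable {V : Type*}

/-- truncated distance `d_k(x,y) = min(d(x,y), k+1)` with `d = ∞` across components. -/
noncomputable def truncDist (G : SimpleGraph V) (k : ℕ) (x y : V) : ℕ∞ :=
  min (G.edist x y) (k + 1)

/-- `f` is a resolving broadcast of `G`. -/
def IsResolvingBroadcast (G : SimpleGraph V) (f : V → ℕ) : Prop :=
  ∀ x y : V, x ≠ y → ∃ z : V, 0 < f z ∧ truncDist G (f z) x z ≠ truncDist G (f z) y z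

/-- broadcast dimension -/
noncomputable def bdim (G : SimpleGraph V) [Fintype V] : ℕ :=
  sInf {c : ℕ | ∃ f : V → ℕ, IsResolvingBroadcast G f ∧ ∑ v, f v = c}

/-- adjacency resolving set -/
def IsAdjResolvingSet (G : SimpleGraph V) (S : Set V) : Prop :=
  ∀ x y : V, x ≠ y → ∃ z ∈ S, truncDist G 1 x z ≠ truncDist G 1 y z

/-- adjacency dimension -/
noncomputable def adim (G : SimpleGraph V) [Fintype V] : ℕ :=
  sInf {n : ℕ | ∃ S : Finset V, IsAdjResolvingSet G ↑S ∧ S.card = n}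

/-- resolving set (metric dimension) -/
def IsResolvingSet (G : SimpleGraph V) (S : Set V) : Prop :=
  ∀ x y : V, x ≠ y → ∃ z ∈ S, G.edist x z ≠ G.edist y z

/-- metric dimension -/
noncomputable def mdim (G : SimpleGraph V) [Fintype V] : ℕ :=
  sInf {n : ℕ | ∃ S : Finset V, IsResolvingSet G ↑S ∧ S.card = n}


section Aux
variable {V : Type*}

lemma clique_card_le [Fintype V] [DecidableEq V] (G : SimpleGraph V)
    (f : V → ℕ) (hf : IsResolvingBroadcast G f) (s : Finset V) (hs : G.IsClique ↑s) :
    s.card ≤ 2 ^ (∑ v, f v) := by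
  classical
  set T : Finset V := univ.filter (fun z => 0 < f z) with hT
  have hTcard : T.card ≤ ∑ v, f v := by
    calc T.card = ∑ _z ∈ T, 1 := by simp
    _ ≤ ∑ z ∈ T, f z := Finset.sum_le_sum (by intro z hz; simp [hT] at hz; omega)
    _ ≤ ∑ v, f v := Finset.sum_le_sum_of_subset (Finset.subset_univ T)
  have h1 : s.card ≤ 2 ^ T.card := by
    set code : V → (↥T → Bool) :=
      fun x z => decide (truncDist G (f z.1) x z.1 = s.sup (fun w => truncDist G (f z.1) w z.1))
      with hcode
    have hinj : Set.InjOn code ↑s := by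
      intro x hx y hy hxy
      by_contra hne
      obtain ⟨z, hfz, hdz⟩ := hf x y hne
      have hzT : z ∈ T := by simp [hT, hfz]
      set t : V → ℕ∞ := fun w => truncDist G (f z) w z with ht
      have key : ∀ a ∈ s, ∀ b ∈ s, t b ≤ t a + 1 := by
        intro a ha b hb
        rcases eq_or_ne a b with rfl | hab
        · exact le_self_add
        · have hadj : G.Adj b a := hs hb ha hab.symm
          have hd : G.edist b z ≤ G.edist a z + 1 := by
            calc G.edist b z ≤ G.edist b a + G.edist a z := SimpleGraph.edist_triangle
            _ = 1 + G.edist a z := by rw [edist_eq_one_iff_adj.mpr hadj]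
            _ = G.edist a z + 1 := add_comm _ _
          calc t b ≤ min (G.edist a z + 1) ((f z : ℕ∞) + 1 + 1) :=
                min_le_min hd (by exact le_self_add)
          _ = min (G.edist a z) ((f z : ℕ∞) + 1) + 1 := by
                rw [← min_add_add_right]
          _ = t a + 1 := rfl
      have claim : ∀ a ∈ s, ∀ b ∈ s, t a < t b → code a ≠ code b := by
        intro a ha b hb hlt hc
        have hM1 : s.sup t ≤ t a + 1 := Finset.sup_le (fun w hw => key a ha w hw)
        have hab1 : t a + 1 ≤ t b := Order.add_one_le_of_lt hlt
        have hbM : t b = s.sup t := le_antisymm (Finset.le_sup hb) (hM1.trans hab1)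
        have haM : t a ≠ s.sup t := by
          rw [← hbM]; exact hlt.ne
        have := congrFun hc ⟨z, hzT⟩
        simp only [hcode, decide_eq_decide] at this
        exact haM (this.mpr hbM)
      rcases hdz.lt_or_gt with h | h
      · exact claim x hx y hy h hxy
      · exact claim y hy x hx h hxy.symm
    calc s.card ≤ (univ : Finset (↥T → Bool)).card :=
          Finset.card_le_card_of_injOn code (fun x _ => Finset.mem_univ _) hinj
    _ = 2 ^ T.card := by simp [Fintype.card_fun]
  exact h1.trans (Nat.pow_le_pow_right (by norm_num) hTcard)

end Aux

set_option linter.unnecessarySeqFocus false in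

def exGraph (k : ℕ) : SimpleGraph ((Fin k → Bool) ⊕ Fin k) where
  Adj x y := match x, y with
    | .inl a, .inl b => a ≠ b
    | .inl a, .inr i => a i = true
    | .inr i, .inl a => a i = true
    | .inr _, .inr _ => False
  symm := ⟨by rintro (a|i) (b|j) h <;> simp_all <;> exact Ne.symm h⟩
  loopless := ⟨by rintro (a|i) h <;> simp_all⟩



lemma exAdj_inl_inl (k : ℕ) (a b : Fin k → Bool) :
    (exGraph k).Adj (.inl a) (.inl b) ↔ a ≠ b := Iff.rfl
lemma exAdj_inl_inr (k : ℕ) (a : Fin k → Bool) (i : Fin k) :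
    (exGraph k).Adj (.inl a) (.inr i) ↔ a i = true := Iff.rfl
lemma exAdj_inr_inr (k : ℕ) (i j : Fin k) :
    ¬ (exGraph k).Adj (.inr i) (.inr j) := fun h => h

lemma two_le_enat {n : ℕ∞} (h0 : n ≠ 0) (h1 : n ≠ 1) : 2 ≤ n := by
  match n with
  | ⊤ => exact le_top
  | (m : ℕ) =>
    have : 2 ≤ m := by
      rcases m with _ | _ | m
      · simp at h0
      · simp at h1
      · omega
    exact_mod_cast this

lemma trunc_eq_zero_iff (G : SimpleGraph V) (n : ℕ) (x z : V) :
    truncDist G n x z = 0 ↔ x = z := by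
  unfold truncDist
  rw [min_eq_iff]
  constructor
  · rintro (⟨h, -⟩ | ⟨h, -⟩)
    · exact edist_eq_zero_iff.mp h
    · exact absurd h (by
        have : (0:ℕ∞) < (n:ℕ∞) + 1 := by
          exact lt_of_lt_of_le zero_lt_one le_add_self
        exact this.ne')
  · rintro rfl; left; simp [edist_eq_zero_iff]

lemma trunc_adj (G : SimpleGraph V) {x z : V} (h : G.Adj x z) :
    truncDist G 1 x z = 1 := by
  unfold truncDist
  rw [edist_eq_one_iff_adj.mpr h]
  rfl

lemma trunc_far (G : SimpleGraph V) {x z : V} (hne : x ≠ z) (h : ¬ G.Adj x z) :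
    truncDist G 1 x z = 2 := by
  unfold truncDist
  have h2 : (2 : ℕ∞) ≤ G.edist x z :=
    two_le_enat (by simp [edist_eq_zero_iff, hne]) (by simp [edist_eq_one_iff_adj, h])
  rw [min_eq_right (by exact_mod_cast h2)]
  rfl

def exF (k : ℕ) : ((Fin k → Bool) ⊕ Fin k) → ℕ := Sum.elim (fun _ => 0) (fun _ => 1)

lemma exF_resolving (k : ℕ) : IsResolvingBroadcast (exGraph k) (exF k) := by
  have self_ne : ∀ (z x : (Fin k → Bool) ⊕ Fin k), x ≠ z →
      truncDist (exGraph k) 1 x z ≠ truncDist (exGraph k) 1 z z := by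
    intro z x hx h
    rw [(trunc_eq_zero_iff (exGraph k) 1 z z).mpr rfl] at h
    exact hx ((trunc_eq_zero_iff _ _ _ _).mp h)
  rintro (a|i) (b|j) hxy
  · -- both clique vertices
    have hab : a ≠ b := fun h => hxy (by rw [h])
    obtain ⟨i, hi⟩ := Function.ne_iff.mp hab
    refine ⟨.inr i, one_pos, ?_⟩
    show truncDist (exGraph k) 1 _ _ ≠ truncDist (exGraph k) 1 _ _
    rcases Bool.eq_false_or_eq_true (a i) with ha | ha <;>
      rcases Bool.eq_false_or_eq_true (b i) with hb | hb
    · exact absurd (ha.trans hb.symm) hi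
    · rw [trunc_adj (exGraph k) ((exAdj_inl_inr k a i).mpr ha),
        trunc_far (exGraph k) (by simp) (by rw [exAdj_inl_inr]; simp [hb])]
      decide
    · rw [trunc_far (exGraph k) (by simp) (by rw [exAdj_inl_inr]; simp [ha]),
        trunc_adj (exGraph k) ((exAdj_inl_inr k b i).mpr hb)]
      decide
    · exact absurd (ha.trans hb.symm) hi
  · exact ⟨.inr j, one_pos, self_ne _ _ hxy⟩
  · exact ⟨.inr i, one_pos, fun h => (self_ne _ _ (Ne.symm hxy)) h.symm⟩
  · exact ⟨.inr i, one_pos, fun h => (self_ne _ _ (Ne.symm hxy)) h.symm⟩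

lemma exF_sum (k : ℕ) : ∑ v, exF k v = k := by
  rw [Fintype.sum_sum_type]
  simp [exF]

lemma bdim_set_nonempty (G : SimpleGraph V) [Fintype V] :
    {c : ℕ | ∃ f : V → ℕ, IsResolvingBroadcast G f ∧ ∑ v, f v = c}.Nonempty := by
  refine ⟨_, fun _ => 1, ?_, rfl⟩
  intro x y hxy
  refine ⟨x, one_pos, ?_⟩
  rw [(trunc_eq_zero_iff G 1 x x).mpr rfl]
  intro h
  exact hxy ((trunc_eq_zero_iff G 1 y x).mp h.symm).symm

def exClique (k : ℕ) : Finset ((Fin k → Bool) ⊕ Fin k) :=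
  Finset.univ.map ⟨Sum.inl, Sum.inl_injective⟩

lemma exClique_card (k : ℕ) : (exClique k).card = 2 ^ k := by
  simp [exClique, Fintype.card_fun]

lemma exClique_isClique (k : ℕ) : (exGraph k).IsClique ↑(exClique k) := by
  intro x hx y hy hxy
  simp only [exClique, Finset.coe_map, Set.mem_image] at hx hy
  obtain ⟨a, -, rfl⟩ := hx
  obtain ⟨b, -, rfl⟩ := hy
  exact fun h => hxy (by rw [h])

theorem stmt_8 (k : ℕ) :
    (∀ (V : Type) (_ : Fintype V) (_ : DecidableEq V) (G : SimpleGraph V)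
      (s : Finset V), bdim G = k → G.IsClique ↑s → s.card ≤ 2 ^ k) ∧
    ∃ (V : Type) (_ : Fintype V) (_ : DecidableEq V) (G : SimpleGraph V)
      (s : Finset V), bdim G = k ∧ G.IsClique ↑s ∧ s.card = 2 ^ k := by
  constructor
  · intro V _ _ G s hbdim hclique
    have hmem : ∃ f : V → ℕ, IsResolvingBroadcast G f ∧ ∑ v, f v = bdim G :=
      Nat.sInf_mem (bdim_set_nonempty G)
    obtain ⟨f, hres, hsum⟩ := hmem
    rw [hbdim] at hsum
    exact hsum ▸ clique_card_le G f hres s hclique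
  · refine ⟨(Fin k → Bool) ⊕ Fin k, inferInstance, inferInstance, exGraph k, exClique k,
      ?_, exClique_isClique k, exClique_card k⟩
    apply le_antisymm
    · exact Nat.sInf_le ⟨exF k, exF_resolving k, exF_sum k⟩
    · have hmem : ∃ f, IsResolvingBroadcast (exGraph k) f ∧ ∑ v, f v = bdim (exGraph k) :=
        Nat.sInf_mem (bdim_set_nonempty (exGraph k))
      obtain ⟨f, hres, hsum⟩ := hmem
      have h := clique_card_le (exGraph k) f hres (exClique k) (exClique_isClique k)
      rw [exClique_card, hsum] at h
      exact (Nat.pow_le_pow_iff_right (by norm_num)).mp h
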